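/- A finite indexed family Y = (y_1, …, y_n) of points in ℝ^d is a regular expansion of a family X = (x_1, …, x_n) of points in ℝ^k if and only if there exists a regular simplex Δ = {z_1, …, z_n} (n distinct points with all pairwise distances equal to some α > 0) such that Y is isometric to the family Y' = ((x_1, z_1), …, (x_n, z_n)) in ℝ^k × ℝ^{d'} , i.e., ‖y_i − y_j‖ = ‖(x_i, z_i) − (x_j, z_j)‖ for all i, j. -/

import Mathlib

open scoped Classical

noncomputable section

/-- The `j`-th vertex of a regular `m`-gon in the Euclidean plane with center `c`,
circumradius `r` and angle `θ`. -/
def polygonVertex (c : EuclideanSpace ℝ (Fin 2)) (r θ : ℝ) (m j : ℕ) :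
    EuclideanSpace ℝ (Fin 2) :=
  (WithLp.equiv 2 (Fin 2 → ℝ)).symm
    ![c 0 + r * Real.cos (2 * Real.pi * j / m + θ),
      c 1 + r * Real.sin (2 * Real.pi * j / m + θ)]

/-- `T` is (the vertex set of) a regular `m`-gon of circumradius `r` in the plane. -/
def IsRegularPolygon (m : ℕ) (r : ℝ) (T : Set (EuclideanSpace ℝ (Fin 2))) : Prop :=
  2 ≤ m ∧ 0 < r ∧
    ∃ (c : EuclideanSpace ℝ (Fin 2)) (θ : ℝ),
      T = {p | ∃ j < m, p = polygonVertex c r θ m j}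

/-- The Cartesian product of `n` planar sets, viewed inside `ℝ^{2n}`. -/
def toriProduct {n : ℕ} (T : Fin n → Set (EuclideanSpace ℝ (Fin 2))) :
    Set (EuclideanSpace ℝ (Fin n × Fin 2)) :=
  {x | ∀ i : Fin n, ((WithLp.equiv 2 (Fin 2 → ℝ)).symm fun j => x (i, j)) ∈ T i}

lemma euclid_dist_single_single {n : ℕ} (i j : Fin n) (hij : i ≠ j) (c : ℝ) :
    dist (EuclideanSpace.single i c) (EuclideanSpace.single j c)
      = Real.sqrt (c ^ 2 + c ^ 2) := by
  rw [EuclideanSpace.dist_eq]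
  congr 1
  simp_rw [Real.dist_eq, sq_abs]
  rw [show (Finset.univ : Finset (Fin n)) = insert i (insert j (Finset.univ \ {i, j})) by
    ext l
    simp only [Finset.mem_insert, Finset.mem_sdiff, Finset.mem_univ, Finset.mem_singleton,
      true_and]
    by_cases h1 : l = i <;> by_cases h2 : l = j <;> simp [h1, h2]]
  rw [Finset.sum_insert (by simp [hij]), Finset.sum_insert (by simp)]
  have : ∀ l ∈ Finset.univ \ ({i, j} : Finset (Fin n)),
      (EuclideanSpace.single i c l - EuclideanSpace.single j c l) ^ 2 = 0 := by
    intro l hl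
    simp only [Finset.mem_sdiff, Finset.mem_insert, Finset.mem_singleton, not_or] at hl
    simp [EuclideanSpace.single_apply, hl.2.1, hl.2.2]
  rw [Finset.sum_eq_zero this]
  simp [EuclideanSpace.single_apply, hij, hij.symm]

/-- A family `y` in `ℝ^d` is a regular expansion of a family `x` in `ℝ^k` if and only if
there is a regular simplex `z` such that `y` is isometric to the family `(x i, z i)`
inside the (ℓ²) product space `ℝ^k × ℝ^{d'}`. -/
theorem regular_expansion_iff_isometric_to_product_with_regular_simplex
    (n d k : ℕ) (y : Fin n → EuclideanSpace ℝ (Fin d))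
    (x : Fin n → EuclideanSpace ℝ (Fin k)) :
    (∃ α > 0, ∀ i j, i ≠ j →
        dist (y i) (y j) ^ 2 = dist (x i) (x j) ^ 2 + α ^ 2) ↔
    (∃ (d' : ℕ) (z : Fin n → EuclideanSpace ℝ (Fin d')),
      Function.Injective z ∧
      (∃ α > 0, ∀ i j, i ≠ j → dist (z i) (z j) = α) ∧
      ∀ i j, dist (y i) (y j) =
        dist ((WithLp.equiv 2 (EuclideanSpace ℝ (Fin k) × EuclideanSpace ℝ (Fin d'))).symm
                (x i, z i))
             ((WithLp.equiv 2 (EuclideanSpace ℝ (Fin k) × EuclideanSpace ℝ (Fin d'))).symm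
                (x j, z j))) := by
  constructor
  · rintro ⟨α, hα, h⟩
    set c : ℝ := α / Real.sqrt 2 with hc
    have hc0 : c ≠ 0 := by
      apply div_ne_zero hα.ne'
      positivity
    refine ⟨n, fun i => EuclideanSpace.single i c, ?_, ⟨α, hα, ?_⟩, ?_⟩
    · intro i j hij
      by_contra hne
      have h1 := congrArg (fun v => v i) hij
      simp [EuclideanSpace.single_apply, hne, Ne.symm hne] at h1
      exact hc0 h1
    · intro i j hij
      rw [euclid_dist_single_single i j hij c]
      have : c ^ 2 + c ^ 2 = α ^ 2 := by
        rw [hc, div_pow, Real.sq_sqrt (by norm_num : (2:ℝ) ≥ 0)]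
        ring
      rw [this, Real.sqrt_sq hα.le]
    · intro i j
      rcases eq_or_ne i j with rfl | hij
      · simp
      · rw [WithLp.prod_dist_eq_of_L2]
        simp only [WithLp.equiv_symm_apply, WithLp.toLp_fst, WithLp.toLp_snd]
        have hz : dist (EuclideanSpace.single (𝕜 := ℝ) i c) (EuclideanSpace.single j c) = α := by
          rw [euclid_dist_single_single i j hij c]
          have : c ^ 2 + c ^ 2 = α ^ 2 := by
            rw [hc, div_pow, Real.sq_sqrt (by norm_num : (2:ℝ) ≥ 0)]
            ring
          rw [this, Real.sqrt_sq hα.le]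
        have hfst : dist (x i) (x j) ^ 2 + α ^ 2 = dist (y i) (y j) ^ 2 := (h i j hij).symm
        calc dist (y i) (y j) = Real.sqrt (dist (y i) (y j) ^ 2) :=
              (Real.sqrt_sq dist_nonneg).symm
          _ = _ := by rw [h i j hij, hz]
  · rintro ⟨d', z, hzinj, ⟨α, hα, hzd⟩, hiso⟩
    refine ⟨α, hα, fun i j hij => ?_⟩
    rw [hiso i j, WithLp.prod_dist_eq_of_L2, Real.sq_sqrt (by positivity)]
    simp only [WithLp.equiv_symm_apply, WithLp.toLp_fst, WithLp.toLp_snd]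
    rw [hzd i j hij]
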